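/- For all indices 1 ≤ i, j ≤ ℓ and every integer m, the quantum affine Cartan–lowering relation holds mode-wise: z·K_i(z)∘F_j^{(m)} − q_i^{−a_{ij}}·K_i(z)∘F_j^{(m+1)} = q_i^{−a_{ij}}·z·F_j^{(m)}∘K_i(z) − F_j^{(m+1)}∘K_i(z), as an identity of ℂ(s)(z)-linear endomorphisms of L (this is the coefficient of w^{−m} in the relation (z − q_i^{−a_{ij}}w)K_i^{±}(z)F_j(w) = (q_i^{−a_{ij}}z − w)F_j(w)K_i^{±}(z)). -/

import Mathlib

open MvPolynomial Finset

set_option synthInstance.maxHeartbeats 1000000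
set_option maxHeartbeats 1000000

noncomputable section

/-- The base field `ℂ(s)`. -/
abbrev K0 := RatFunc ℂ

/-- The variables. -/
abbrev Var (ℓ : ℕ) (m l : Fin ℓ → ℕ) := Unit ⊕ (((i : Fin ℓ) × Fin (m i)) ⊕ ((i : Fin ℓ) × Fin (l i)))

/-- The rational function field over `ℂ(s)` in the given variables. -/
abbrev FF (ℓ : ℕ) (m l : Fin ℓ → ℕ) := FractionRing (MvPolynomial (Var ℓ m l) K0)

variable (ℓ : ℕ) (m l : Fin ℓ → ℕ) (d : Fin ℓ → ℕ) (a : Fin ℓ → Fin ℓ → ℤ)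

def cstHom : K0 →+* FF ℓ m l :=
  (algebraMap (MvPolynomial (Var ℓ m l) K0) (FF ℓ m l)).comp
    (C : K0 →+* MvPolynomial (Var ℓ m l) K0)

def cst (c : K0) : FF ℓ m l := cstHom ℓ m l c

/-- The variable `V_{i,k}`. -/
def V (i : Fin ℓ) (k : Fin (m i)) : FF ℓ m l :=
  algebraMap (MvPolynomial (Var ℓ m l) K0) (FF ℓ m l) (X (Sum.inr (Sum.inl ⟨i, k⟩)))

/-- The variable `W_{i,t}`. -/
def W (i : Fin ℓ) (t : Fin (l i)) : FF ℓ m l :=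
  algebraMap (MvPolynomial (Var ℓ m l) K0) (FF ℓ m l) (X (Sum.inr (Sum.inr ⟨i, t⟩)))

/-- The variable `z`. -/
def zvar : FF ℓ m l :=
  algebraMap (MvPolynomial (Var ℓ m l) K0) (FF ℓ m l) (X (Sum.inl ()))

/-- `s ∈ ℂ(s)`. -/
def sElt : K0 := RatFunc.X

/-- `q = s²`. -/
def qElt : K0 := RatFunc.X ^ 2

/-- `q^e` for an integer exponent `e`. -/
def qz (e : ℤ) : K0 := qElt ^ e

/-- `q_i^e = q^{d_i·e}`. -/
def qiz (i : Fin ℓ) (e : ℤ) : K0 := qElt ^ ((d i : ℤ) * e)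

/-- `q_i − q_i⁻¹`. -/
def qdiff (i : Fin ℓ) : K0 := qiz ℓ d i 1 - qiz ℓ d i (-1)

/-- `c_i = s^{Σ_j d_j·m_j·a_{ji}}`. -/
def cElt (i : Fin ℓ) : K0 := sElt ^ (∑ j : Fin ℓ, (d j : ℤ) * (m j : ℤ) * a j i)

/-- The algebra automorphism of the polynomial ring rescaling the variable `w` by the
nonzero constant `c` and fixing all other variables. -/
def scalePoly (c : K0) (hc : c ≠ 0) (w : Var ℓ m l) :
    MvPolynomial (Var ℓ m l) K0 ≃ₐ[K0] MvPolynomial (Var ℓ m l) K0 :=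
  AlgEquiv.ofAlgHom
    (aeval (fun j => if j = w then MvPolynomial.C c * X j else X j))
    (aeval (fun j => if j = w then MvPolynomial.C c⁻¹ * X j else X j))
    (by
      apply MvPolynomial.algHom_ext; intro j
      by_cases h : j = w <;>
        simp [h, ← mul_assoc, ← C_mul, mul_inv_cancel₀ hc, inv_mul_cancel₀ hc])
    (by
      apply MvPolynomial.algHom_ext; intro j
      by_cases h : j = w <;>
        simp [h, ← mul_assoc, ← C_mul, mul_inv_cancel₀ hc, inv_mul_cancel₀ hc])

/-- The induced automorphism of `F`. -/
def scaleField (c : K0) (hc : c ≠ 0) (w : Var ℓ m l) : FF ℓ m l ≃+* FF ℓ m l :=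
  IsFractionRing.ringEquivOfRingEquiv (scalePoly ℓ m l c hc w).toRingEquiv

/-- `u_{i,k}` : the automorphism `V_{i,k} ↦ q^{d_i}·V_{i,k}`. -/
def uik (i : Fin ℓ) (k : Fin (m i)) : FF ℓ m l ≃+* FF ℓ m l :=
  scaleField ℓ m l (qElt ^ (d i)) (pow_ne_zero _ (pow_ne_zero _ RatFunc.X_ne_zero))
    (Sum.inr (Sum.inl ⟨i, k⟩))

/-- The field `ℂ(s)({W_{i,t}})` of rational functions in the `W`-variables only:
the coefficient field for the polynomials `R_i^{(±)}`. -/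
abbrev WField := FractionRing (MvPolynomial ((i : Fin ℓ) × Fin (l i)) K0)

/-- `W_{i,t}` as an element of `ℂ(s)({W_{i,t}})`. -/
def Wsmall (i : Fin ℓ) (t : Fin (l i)) : WField ℓ l :=
  algebraMap (MvPolynomial ((i : Fin ℓ) × Fin (l i)) K0) (WField ℓ l) (X ⟨i, t⟩)

/-- The natural embedding `ℂ(s)({W_{i,t}}) ↪ F`. -/
def wEmb : WField ℓ l →+* FF ℓ m l :=
  IsFractionRing.lift (g :=
    ((algebraMap (MvPolynomial (Var ℓ m l) K0) (FF ℓ m l)).comp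
      (rename (fun w => Sum.inr (Sum.inr w))).toRingHom))
    ((IsFractionRing.injective (MvPolynomial (Var ℓ m l) K0) (FF ℓ m l)).comp
      (rename_injective _ (Sum.inr_injective.comp Sum.inr_injective)))

/-- Evaluation of a polynomial with coefficients in `ℂ(s)({W_{i,t}})` at a point of `F`. -/
def Rval (P : Polynomial (WField ℓ l)) (x : FF ℓ m l) : FF ℓ m l :=
  Polynomial.eval₂ (wEmb ℓ m l) x P

/-- Multiplication by the rational function `K_i(z)` (with `z` the extra variable). -/
def KopZ (i : Fin ℓ) : FF ℓ m l → FF ℓ m l := fun f =>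
  (cst ℓ m l (cElt ℓ m d a i) * (∏ j : Fin ℓ, ∏ p : Fin (m j), (V ℓ m l j p) ^ (a j i)) *
    (∏ t : Fin (l i), (zvar ℓ m l * (W ℓ m l i t)⁻¹ - W ℓ m l i t)) *
    (∏ j ∈ univ.erase i, ∏ r ∈ range (-(a j i)).toNat, ∏ p : Fin (m j),
      (zvar ℓ m l
        - cst ℓ m l (qz ((d j : ℤ) * (a j i + 2 * ((r : ℤ) + 1)))) * (V ℓ m l j p) ^ 2)) /
    (∏ p : Fin (m i),
      ((zvar ℓ m l - (V ℓ m l i p) ^ 2) *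
        (zvar ℓ m l - cst ℓ m l (qiz ℓ d i 2) * (V ℓ m l i p) ^ 2)))) * f

/-- The mode operator `F_i^{(n)}`. -/
def Fnop (Rm : (i : Fin ℓ) → Polynomial (WField ℓ l)) (i : Fin ℓ) (n : ℤ) :
    FF ℓ m l → FF ℓ m l := fun f =>
  cst ℓ m l (-(qiz ℓ d i (-(2 * (m i : ℤ))) / qdiff ℓ d i)) * (∏ p : Fin (m i), V ℓ m l i p) *
    (∏ j ∈ univ.filter (fun j => j < i), ∏ p : Fin (m j), (V ℓ m l j p) ^ (a j i)) *
    ∑ k : Fin (m i),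
      (cst ℓ m l (qiz ℓ d i (2 * n)) * (V ℓ m l i k) ^ (2 * n - 2)
          * Rval ℓ m l (Rm i) (cst ℓ m l (qiz ℓ d i 2) * (V ℓ m l i k) ^ 2) *
        (∏ j ∈ univ.filter (fun j => j < i), ∏ r ∈ range (-(a j i)).toNat, ∏ p : Fin (m j),
          (cst ℓ m l (qiz ℓ d i 2) * (V ℓ m l i k) ^ 2
            - cst ℓ m l (qz ((d j : ℤ) * (a j i + 2 * ((r : ℤ) + 1)))) * (V ℓ m l j p) ^ 2)) /
        (∏ p ∈ univ.erase k, ((V ℓ m l i k) ^ 2 - (V ℓ m l i p) ^ 2))) *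
      (uik ℓ m l d i k) f

section Aux

variable (ℓ : ℕ) (m l : Fin ℓ → ℕ) (d : Fin ℓ → ℕ)

lemma qElt_ne : (qElt : K0) ≠ 0 := pow_ne_zero _ RatFunc.X_ne_zero

lemma algMap_eq_zero_iff (p : MvPolynomial (Var ℓ m l) K0) :
    algebraMap (MvPolynomial (Var ℓ m l) K0) (FF ℓ m l) p = 0 ↔ p = 0 :=
  map_eq_zero_iff _ (IsFractionRing.injective _ _)

lemma uik_algebraMap (j : Fin ℓ) (k : Fin (m j)) (p : MvPolynomial (Var ℓ m l) K0) :
    uik ℓ m l d j k (algebraMap (MvPolynomial (Var ℓ m l) K0) (FF ℓ m l) p) =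
      algebraMap (MvPolynomial (Var ℓ m l) K0) (FF ℓ m l)
        (aeval (fun v => if v = (Sum.inr (Sum.inl ⟨j, k⟩) : Var ℓ m l)
            then MvPolynomial.C (qElt ^ (d j)) * X v else X v) p) := by
  rw [uik, scaleField, IsFractionRing.ringEquivOfRingEquiv_algebraMap]
  rfl

lemma uik_V_self (j : Fin ℓ) (k : Fin (m j)) :
    uik ℓ m l d j k (V ℓ m l j k) = cst ℓ m l (qElt ^ (d j)) * V ℓ m l j k := by
  rw [V, uik_algebraMap]
  simp [cst, cstHom, V]

lemma uik_V_ne (j : Fin ℓ) (k : Fin (m j)) (j' : Fin ℓ) (p : Fin (m j'))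
    (h : (⟨j', p⟩ : (i : Fin ℓ) × Fin (m i)) ≠ ⟨j, k⟩) :
    uik ℓ m l d j k (V ℓ m l j' p) = V ℓ m l j' p := by
  rw [V, uik_algebraMap]
  simp [h]

lemma uik_W (j : Fin ℓ) (k : Fin (m j)) (i : Fin ℓ) (t : Fin (l i)) :
    uik ℓ m l d j k (W ℓ m l i t) = W ℓ m l i t := by
  rw [W, uik_algebraMap]; simp

lemma uik_zvar (j : Fin ℓ) (k : Fin (m j)) :
    uik ℓ m l d j k (zvar ℓ m l) = zvar ℓ m l := by
  rw [zvar, uik_algebraMap]; simp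

lemma uik_cst (j : Fin ℓ) (k : Fin (m j)) (c : K0) :
    uik ℓ m l d j k (cst ℓ m l c) = cst ℓ m l c := by
  rw [cst, cstHom, RingHom.comp_apply, uik_algebraMap]; simp [cst, cstHom]

lemma cst_mul (x y : K0) : cst ℓ m l (x * y) = cst ℓ m l x * cst ℓ m l y :=
  map_mul (cstHom ℓ m l) x y

lemma cst_pow (x : K0) (n : ℕ) : cst ℓ m l x ^ n = cst ℓ m l (x ^ n) :=
  (map_pow (cstHom ℓ m l) x n).symm

lemma cst_zpow (x : K0) (n : ℤ) : cst ℓ m l x ^ n = cst ℓ m l (x ^ n) :=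
  (map_zpow₀ (cstHom ℓ m l) x n).symm

lemma cst_one : cst ℓ m l 1 = 1 := map_one (cstHom ℓ m l)

lemma cst_ne_zero (x : K0) (hx : x ≠ 0) : cst ℓ m l x ≠ 0 := by
  simp only [cst, cstHom, RingHom.comp_apply, Ne, algMap_eq_zero_iff]
  simpa using hx

lemma V_ne_zero (j : Fin ℓ) (p : Fin (m j)) : V ℓ m l j p ≠ 0 := by
  rw [V, Ne, algMap_eq_zero_iff]
  exact X_ne_zero _

lemma lin_ne_zero (c : K0) (j : Fin ℓ) (p : Fin (m j)) :
    zvar ℓ m l - cst ℓ m l c * V ℓ m l j p ^ 2 ≠ 0 := by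
  have heq : zvar ℓ m l - cst ℓ m l c * V ℓ m l j p ^ 2 =
      algebraMap (MvPolynomial (Var ℓ m l) K0) (FF ℓ m l)
        (X (Sum.inl ()) - MvPolynomial.C c * X (Sum.inr (Sum.inl ⟨j, p⟩)) ^ 2) := by
    simp [zvar, cst, cstHom, V]
  rw [heq, Ne, algMap_eq_zero_iff]
  intro h2
  simpa using congrArg
    (MvPolynomial.eval (fun v => if v = (Sum.inl () : Var ℓ m l) then (1:K0) else 0)) h2

lemma lin1_ne_zero (j : Fin ℓ) (p : Fin (m j)) :
    zvar ℓ m l - V ℓ m l j p ^ 2 ≠ 0 := by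
  have := lin_ne_zero ℓ m l 1 j p
  rw [cst_one, one_mul] at this
  exact this

end Aux
section Aux2

variable (ℓ : ℕ) (m l : Fin ℓ → ℕ) (d : Fin ℓ → ℕ) (a : Fin ℓ → Fin ℓ → ℤ)

/-- The multiplier of `K_i(z)`. -/
def Kmul (i : Fin ℓ) : FF ℓ m l :=
  cst ℓ m l (cElt ℓ m d a i) * (∏ j : Fin ℓ, ∏ p : Fin (m j), (V ℓ m l j p) ^ (a j i)) *
    (∏ t : Fin (l i), (zvar ℓ m l * (W ℓ m l i t)⁻¹ - W ℓ m l i t)) *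
    (∏ j ∈ univ.erase i, ∏ r ∈ range (-(a j i)).toNat, ∏ p : Fin (m j),
      (zvar ℓ m l
        - cst ℓ m l (qz ((d j : ℤ) * (a j i + 2 * ((r : ℤ) + 1)))) * (V ℓ m l j p) ^ 2)) /
    (∏ p : Fin (m i),
      ((zvar ℓ m l - (V ℓ m l i p) ^ 2) *
        (zvar ℓ m l - cst ℓ m l (qiz ℓ d i 2) * (V ℓ m l i p) ^ 2)))

lemma KopZ_apply (i : Fin ℓ) (f : FF ℓ m l) :
    KopZ ℓ m l d a i f = Kmul ℓ m l d a i * f := rfl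

/-- The `k`-independent prefactor of `F_i^{(n)}`. -/
def Pref (i : Fin ℓ) : FF ℓ m l :=
  cst ℓ m l (-(qiz ℓ d i (-(2 * (m i : ℤ))) / qdiff ℓ d i)) * (∏ p : Fin (m i), V ℓ m l i p) *
    (∏ j ∈ univ.filter (fun j => j < i), ∏ p : Fin (m j), (V ℓ m l j p) ^ (a j i))

/-- The coefficient of `u_{i,k}` in `F_i^{(n)}`. -/
def Gcoef (Rm : (i : Fin ℓ) → Polynomial (WField ℓ l)) (i : Fin ℓ) (n : ℤ) (k : Fin (m i)) : FF ℓ m l :=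
  cst ℓ m l (qiz ℓ d i (2 * n)) * (V ℓ m l i k) ^ (2 * n - 2)
      * Rval ℓ m l (Rm i) (cst ℓ m l (qiz ℓ d i 2) * (V ℓ m l i k) ^ 2) *
    (∏ j ∈ univ.filter (fun j => j < i), ∏ r ∈ range (-(a j i)).toNat, ∏ p : Fin (m j),
      (cst ℓ m l (qiz ℓ d i 2) * (V ℓ m l i k) ^ 2
        - cst ℓ m l (qz ((d j : ℤ) * (a j i + 2 * ((r : ℤ) + 1)))) * (V ℓ m l j p) ^ 2)) /
    (∏ p ∈ univ.erase k, ((V ℓ m l i k) ^ 2 - (V ℓ m l i p) ^ 2))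

lemma Fnop_apply (Rm : (i : Fin ℓ) → Polynomial (WField ℓ l)) (i : Fin ℓ) (n : ℤ)
    (f : FF ℓ m l) :
    Fnop ℓ m l d a Rm i n f =
      Pref ℓ m l d a i *
        ∑ k : Fin (m i), Gcoef ℓ m l d a Rm i n k * (uik ℓ m l d i k) f := rfl

end Aux2
section Aux3

variable (ℓ : ℕ) (m l : Fin ℓ → ℕ) (d : Fin ℓ → ℕ)

lemma uik_V_ne' (j : Fin ℓ) (k : Fin (m j)) (j' : Fin ℓ) (p : Fin (m j'))
    (h : j' ≠ j) : uik ℓ m l d j k (V ℓ m l j' p) = V ℓ m l j' p :=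
  uik_V_ne ℓ m l d j k j' p (fun he => h (congrArg Sigma.fst he))

lemma uik_V_ne'' (j : Fin ℓ) (k : Fin (m j)) (p : Fin (m j))
    (h : p ≠ k) : uik ℓ m l d j k (V ℓ m l j p) = V ℓ m l j p :=
  uik_V_ne ℓ m l d j k j p (fun he => h (by simpa using he))

lemma uik_prod_fix {α : Type*} (j : Fin ℓ) (k : Fin (m j)) (s : Finset α)
    (g : α → FF ℓ m l) (h : ∀ x ∈ s, uik ℓ m l d j k (g x) = g x) :
    uik ℓ m l d j k (∏ x ∈ s, g x) = ∏ x ∈ s, g x := by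
  rw [map_prod]; exact Finset.prod_congr rfl h

lemma uik_prod_scale {α : Type*} [DecidableEq α] (j : Fin ℓ) (k : Fin (m j))
    (s : Finset α) (x0 : α) (hx0 : x0 ∈ s) (g : α → FF ℓ m l) (c : FF ℓ m l)
    (h1 : uik ℓ m l d j k (g x0) = c * g x0)
    (h2 : ∀ x ∈ s, x ≠ x0 → uik ℓ m l d j k (g x) = g x) :
    uik ℓ m l d j k (∏ x ∈ s, g x) = c * ∏ x ∈ s, g x := by
  rw [map_prod, ← Finset.mul_prod_erase s (fun x => uik ℓ m l d j k (g x)) hx0,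
    ← Finset.mul_prod_erase s g hx0, h1,
    Finset.prod_congr rfl
      (fun x hx => h2 x (Finset.mem_of_mem_erase hx) (Finset.ne_of_mem_erase hx)),
    mul_assoc]

variable (a : Fin ℓ → Fin ℓ → ℤ)

lemma uik_P1 (i j : Fin ℓ) (k : Fin (m j)) :
    uik ℓ m l d j k (∏ j' : Fin ℓ, ∏ p : Fin (m j'), (V ℓ m l j' p) ^ (a j' i)) =
      cst ℓ m l ((qElt ^ (d j)) ^ (a j i)) *
        ∏ j' : Fin ℓ, ∏ p : Fin (m j'), (V ℓ m l j' p) ^ (a j' i) := by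
  refine uik_prod_scale ℓ m l d j k univ j (mem_univ j) _ _ ?_ ?_
  · refine uik_prod_scale ℓ m l d j k univ k (mem_univ k) _ _ ?_ ?_
    · rw [map_zpow₀, uik_V_self, mul_zpow]
      congr 1
      exact (map_zpow₀ (cstHom ℓ m l) _ _).symm
    · intro p _ hp
      rw [map_zpow₀, uik_V_ne'' ℓ m l d j k p hp]
  · intro j' _ hj'
    refine uik_prod_fix ℓ m l d j k univ _ (fun p _ => ?_)
    rw [map_zpow₀, uik_V_ne' ℓ m l d j k j' p hj']

lemma uik_P2 (i j : Fin ℓ) (k : Fin (m j)) :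
    uik ℓ m l d j k (∏ t : Fin (l i), (zvar ℓ m l * (W ℓ m l i t)⁻¹ - W ℓ m l i t)) =
      ∏ t : Fin (l i), (zvar ℓ m l * (W ℓ m l i t)⁻¹ - W ℓ m l i t) := by
  refine uik_prod_fix ℓ m l d j k univ _ (fun t _ => ?_)
  rw [map_sub, map_mul, map_inv₀, uik_zvar, uik_W]

end Aux3
section Key

variable (ℓ : ℕ) (m l : Fin ℓ → ℕ) (d : Fin ℓ → ℕ) (a : Fin ℓ → Fin ℓ → ℤ)

lemma key_eq (ha : ∀ i, a i i = 2) (j : Fin ℓ) (k : Fin (m j)) :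
    (zvar ℓ m l
        - cst ℓ m l (qiz ℓ d j (-(a j j))) * (cst ℓ m l (qiz ℓ d j 2) * V ℓ m l j k ^ 2))
        * Kmul ℓ m l d a j
      = (cst ℓ m l (qiz ℓ d j (-(a j j))) * zvar ℓ m l
          - cst ℓ m l (qiz ℓ d j 2) * V ℓ m l j k ^ 2)
        * uik ℓ m l d j k (Kmul ℓ m l d a j) := by
  classical
  have hcq2 : (cst ℓ m l (qElt ^ (d j))) ^ 2 = cst ℓ m l (qiz ℓ d j 2) := by
    rw [cst_pow]
    congr 1
    rw [qiz, ← zpow_natCast qElt (d j), ← zpow_natCast (qElt ^ ((d j : ℕ) : ℤ)) 2, ← zpow_mul]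
    norm_num
  have hVk2 : uik ℓ m l d j k (V ℓ m l j k ^ 2) =
      cst ℓ m l (qiz ℓ d j 2) * V ℓ m l j k ^ 2 := by
    rw [map_pow, uik_V_self, mul_pow, hcq2]
  have hP1 := uik_P1 ℓ m l d a j j k
  have hP1' : cst ℓ m l ((qElt ^ (d j)) ^ (a j j)) = cst ℓ m l (qiz ℓ d j 2) := by
    congr 1
    rw [ha j, qiz, ← zpow_natCast qElt (d j), ← zpow_mul]
  rw [hP1'] at hP1
  have hP2 := uik_P2 ℓ m l d j j k
  have hP3 : uik ℓ m l d j k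
      (∏ j' ∈ univ.erase j, ∏ r ∈ range (-(a j' j)).toNat, ∏ p : Fin (m j'),
        (zvar ℓ m l
          - cst ℓ m l (qz ((d j' : ℤ) * (a j' j + 2 * ((r : ℤ) + 1)))) * (V ℓ m l j' p) ^ 2))
      = ∏ j' ∈ univ.erase j, ∏ r ∈ range (-(a j' j)).toNat, ∏ p : Fin (m j'),
        (zvar ℓ m l
          - cst ℓ m l (qz ((d j' : ℤ) * (a j' j + 2 * ((r : ℤ) + 1)))) * (V ℓ m l j' p) ^ 2) := by
    refine uik_prod_fix ℓ m l d j k _ _ (fun j' hj' => ?_)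
    refine uik_prod_fix ℓ m l d j k _ _ (fun r _ => ?_)
    refine uik_prod_fix ℓ m l d j k _ _ (fun p _ => ?_)
    simp only [map_sub, map_mul, map_pow, uik_zvar, uik_cst]
    rw [uik_V_ne' ℓ m l d j k j' p (Finset.ne_of_mem_erase hj')]
  have hP4 : uik ℓ m l d j k
      (∏ p : Fin (m j), ((zvar ℓ m l - V ℓ m l j p ^ 2) *
        (zvar ℓ m l - cst ℓ m l (qiz ℓ d j 2) * V ℓ m l j p ^ 2)))
      = ((zvar ℓ m l - cst ℓ m l (qiz ℓ d j 2) * V ℓ m l j k ^ 2) *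
          (zvar ℓ m l - cst ℓ m l (qiz ℓ d j 2) * (cst ℓ m l (qiz ℓ d j 2) * V ℓ m l j k ^ 2))) *
        ∏ p ∈ univ.erase k, ((zvar ℓ m l - V ℓ m l j p ^ 2) *
          (zvar ℓ m l - cst ℓ m l (qiz ℓ d j 2) * V ℓ m l j p ^ 2)) := by
    rw [map_prod, ← Finset.mul_prod_erase univ
      (fun p => uik ℓ m l d j k ((zvar ℓ m l - V ℓ m l j p ^ 2) *
        (zvar ℓ m l - cst ℓ m l (qiz ℓ d j 2) * V ℓ m l j p ^ 2))) (mem_univ k)]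
    congr 1
    · rw [map_mul, map_sub, map_sub, map_mul, uik_zvar, uik_cst, hVk2]
    · refine Finset.prod_congr rfl (fun p hp => ?_)
      simp only [map_mul, map_sub, map_pow, uik_zvar, uik_cst]
      rw [uik_V_ne'' ℓ m l d j k p (Finset.ne_of_mem_erase hp)]
  have hqq : cst ℓ m l (qiz ℓ d j (-(a j j))) * cst ℓ m l (qiz ℓ d j 2) = 1 := by
    rw [← cst_mul, ha j, qiz, qiz, ← zpow_add₀ qElt_ne,
      show ((d j : ℤ)) * -(2:ℤ) + (d j : ℤ) * 2 = 0 by ring, zpow_zero, cst_one]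
  have hE : (∏ p ∈ univ.erase k, ((zvar ℓ m l - V ℓ m l j p ^ 2) *
      (zvar ℓ m l - cst ℓ m l (qiz ℓ d j 2) * V ℓ m l j p ^ 2))) ≠ 0 :=
    Finset.prod_ne_zero_iff.mpr fun p _ =>
      mul_ne_zero (lin1_ne_zero ℓ m l j p) (lin_ne_zero ℓ m l _ j p)
  have hD1 : ((zvar ℓ m l - V ℓ m l j k ^ 2) *
      (zvar ℓ m l - cst ℓ m l (qiz ℓ d j 2) * V ℓ m l j k ^ 2)) *
      (∏ p ∈ univ.erase k, ((zvar ℓ m l - V ℓ m l j p ^ 2) *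
        (zvar ℓ m l - cst ℓ m l (qiz ℓ d j 2) * V ℓ m l j p ^ 2))) ≠ 0 :=
    mul_ne_zero (mul_ne_zero (lin1_ne_zero ℓ m l j k) (lin_ne_zero ℓ m l _ j k)) hE
  have h2' : zvar ℓ m l - cst ℓ m l (qiz ℓ d j 2) *
      (cst ℓ m l (qiz ℓ d j 2) * V ℓ m l j k ^ 2) ≠ 0 := by
    have h := lin_ne_zero ℓ m l (qiz ℓ d j 2 * qiz ℓ d j 2) j k
    rw [cst_mul, mul_assoc] at h
    exact h
  have hD2 : ((zvar ℓ m l - cst ℓ m l (qiz ℓ d j 2) * V ℓ m l j k ^ 2) *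
      (zvar ℓ m l - cst ℓ m l (qiz ℓ d j 2) *
        (cst ℓ m l (qiz ℓ d j 2) * V ℓ m l j k ^ 2))) *
      (∏ p ∈ univ.erase k, ((zvar ℓ m l - V ℓ m l j p ^ 2) *
        (zvar ℓ m l - cst ℓ m l (qiz ℓ d j 2) * V ℓ m l j p ^ 2))) ≠ 0 :=
    mul_ne_zero (mul_ne_zero (lin_ne_zero ℓ m l _ j k) h2') hE
  simp only [Kmul]
  rw [map_div₀, map_mul, map_mul, map_mul, uik_cst, hP1, hP2, hP3, hP4]
  rw [← Finset.mul_prod_erase univ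
    (fun p => ((zvar ℓ m l - V ℓ m l j p ^ 2) *
      (zvar ℓ m l - cst ℓ m l (qiz ℓ d j 2) * V ℓ m l j p ^ 2))) (mem_univ k)]
  rw [← mul_div_assoc, ← mul_div_assoc, div_eq_div_iff hD1 hD2]
  linear_combination (-(cst ℓ m l (cElt ℓ m d a j) *
    (∏ j' : Fin ℓ, ∏ p : Fin (m j'), V ℓ m l j' p ^ a j' j) *
    (∏ t : Fin (l j), (zvar ℓ m l * (W ℓ m l j t)⁻¹ - W ℓ m l j t)) *
    (∏ j' ∈ univ.erase j, ∏ r ∈ range (-(a j' j)).toNat, ∏ p : Fin (m j'),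
      (zvar ℓ m l - cst ℓ m l (qz ((d j' : ℤ) * (a j' j + 2 * ((r : ℤ) + 1)))) *
        V ℓ m l j' p ^ 2)) *
    (∏ p ∈ univ.erase k, ((zvar ℓ m l - V ℓ m l j p ^ 2) *
      (zvar ℓ m l - cst ℓ m l (qiz ℓ d j 2) * V ℓ m l j p ^ 2))) *
    (zvar ℓ m l - cst ℓ m l (qiz ℓ d j 2) * V ℓ m l j k ^ 2) *
    (zvar ℓ m l ^ 2 - cst ℓ m l (qiz ℓ d j 2) ^ 2 * V ℓ m l j k ^ 4))) * hqq

end Key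
section Key2

variable (ℓ : ℕ) (m l : Fin ℓ → ℕ) (d : Fin ℓ → ℕ) (a : Fin ℓ → Fin ℓ → ℤ)

lemma key_ne (ha' : ∀ i j, i ≠ j → a i j ≤ 0)
    (hsym : ∀ i j, (d i : ℤ) * a i j = (d j : ℤ) * a j i)
    (i j : Fin ℓ) (hji : j ≠ i) (k : Fin (m j)) :
    (zvar ℓ m l - cst ℓ m l (qiz ℓ d i (-(a i j))) * (cst ℓ m l (qiz ℓ d j 2) * V ℓ m l j k ^ 2)) * Kmul ℓ m l d a i
      = (cst ℓ m l (qiz ℓ d i (-(a i j))) * zvar ℓ m l - cst ℓ m l (qiz ℓ d j 2) * V ℓ m l j k ^ 2) * uik ℓ m l d j k (Kmul ℓ m l d a i) := by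
  classical
  have hA0 : (0:ℤ) ≤ -(a j i) := neg_nonneg.mpr (ha' j i hji)
  have hcq2 : (cst ℓ m l (qElt ^ (d j))) ^ 2 = cst ℓ m l (qiz ℓ d j 2) := by
    rw [cst_pow]
    congr 1
    rw [qiz, ← zpow_natCast qElt (d j), ← zpow_natCast (qElt ^ ((d j : ℕ) : ℤ)) 2, ← zpow_mul]
    norm_num
  have hVk2 : uik ℓ m l d j k (V ℓ m l j k ^ 2) = cst ℓ m l (qiz ℓ d j 2) * V ℓ m l j k ^ 2 := by
    rw [map_pow, uik_V_self, mul_pow, hcq2]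
  have hP1 := uik_P1 ℓ m l d a i j k
  have hP2 := uik_P2 ℓ m l d i j k
  have hP4 : uik ℓ m l d j k (∏ p : Fin (m i), ((zvar ℓ m l - V ℓ m l i p ^ 2) * (zvar ℓ m l - cst ℓ m l (qiz ℓ d i 2) * V ℓ m l i p ^ 2))) = (∏ p : Fin (m i), ((zvar ℓ m l - V ℓ m l i p ^ 2) * (zvar ℓ m l - cst ℓ m l (qiz ℓ d i 2) * V ℓ m l i p ^ 2))) := by
    refine uik_prod_fix ℓ m l d j k _ _ (fun p _ => ?_)
    simp only [map_mul, map_sub, map_pow, uik_zvar, uik_cst]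
    rw [uik_V_ne' ℓ m l d j k i p (Ne.symm hji)]
  have hjmem : j ∈ univ.erase i := Finset.mem_erase.mpr ⟨hji, mem_univ j⟩
  have hshift : ∀ r : ℕ, qz ((d j : ℤ) * (a j i + 2 * ((r : ℤ) + 1))) * qiz ℓ d j 2
      = qz ((d j : ℤ) * (a j i + 2 * (((r + 1 : ℕ) : ℤ) + 1))) := by
    intro r
    rw [qz, qz, qiz, ← zpow_add₀ qElt_ne]
    congr 1
    push_cast
    ring
  have huBj : uik ℓ m l d j k (∏ r ∈ range (-(a j i)).toNat, ∏ p : Fin (m j), (zvar ℓ m l - cst ℓ m l (qz ((d j : ℤ) * (a j i + 2 * ((r : ℤ) + 1)))) * V ℓ m l j p ^ 2)) = (∏ r ∈ range (-(a j i)).toNat, (zvar ℓ m l - cst ℓ m l (qz ((d j : ℤ) * (a j i + 2 * (((r + 1 : ℕ) : ℤ) + 1)))) * V ℓ m l j k ^ 2)) * (∏ r ∈ range (-(a j i)).toNat, ∏ p ∈ univ.erase k, (zvar ℓ m l - cst ℓ m l (qz ((d j : ℤ) * (a j i + 2 * ((r : ℤ) + 1)))) * V ℓ m l j p ^ 2))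 := by
    rw [map_prod, ← Finset.prod_mul_distrib]
    refine Finset.prod_congr rfl (fun r _ => ?_)
    rw [map_prod, ← Finset.mul_prod_erase univ
      (fun p => uik ℓ m l d j k (zvar ℓ m l - cst ℓ m l (qz ((d j : ℤ) * (a j i + 2 * ((r : ℤ) + 1)))) * V ℓ m l j p ^ 2))
      (mem_univ k)]
    congr 1
    · rw [map_sub, map_mul, uik_zvar, uik_cst, hVk2, ← mul_assoc, ← cst_mul, hshift r]
    · refine Finset.prod_congr rfl (fun p hp => ?_)
      simp only [map_sub, map_mul, map_pow, uik_zvar, uik_cst]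
      rw [uik_V_ne'' ℓ m l d j k p (Finset.ne_of_mem_erase hp)]
  have hBsplit : (∏ r ∈ range (-(a j i)).toNat, ∏ p : Fin (m j), (zvar ℓ m l - cst ℓ m l (qz ((d j : ℤ) * (a j i + 2 * ((r : ℤ) + 1)))) * V ℓ m l j p ^ 2)) = (∏ r ∈ range (-(a j i)).toNat, (zvar ℓ m l - cst ℓ m l (qz ((d j : ℤ) * (a j i + 2 * ((r : ℤ) + 1)))) * V ℓ m l j k ^ 2)) * (∏ r ∈ range (-(a j i)).toNat, ∏ p ∈ univ.erase k, (zvar ℓ m l - cst ℓ m l (qz ((d j : ℤ) * (a j i + 2 * ((r : ℤ) + 1)))) * V ℓ m l j p ^ 2)) := by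
    rw [← Finset.prod_mul_distrib]
    exact Finset.prod_congr rfl (fun r _ => (Finset.mul_prod_erase univ _ (mem_univ k)).symm)
  have hufix : ∀ j' ∈ (univ.erase i).erase j, uik ℓ m l d j k (∏ r ∈ range (-(a j' i)).toNat, ∏ p : Fin (m j'), (zvar ℓ m l - cst ℓ m l (qz ((d j' : ℤ) * (a j' i + 2 * ((r : ℤ) + 1)))) * V ℓ m l j' p ^ 2)) = ∏ r ∈ range (-(a j' i)).toNat, ∏ p : Fin (m j'), (zvar ℓ m l - cst ℓ m l (qz ((d j' : ℤ) * (a j' i + 2 * ((r : ℤ) + 1)))) * V ℓ m l j' p ^ 2) := by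
    intro j' hj'
    refine uik_prod_fix ℓ m l d j k _ _ (fun r _ => ?_)
    refine uik_prod_fix ℓ m l d j k _ _ (fun p _ => ?_)
    simp only [map_sub, map_mul, map_pow, uik_zvar, uik_cst]
    rw [uik_V_ne' ℓ m l d j k j' p (Finset.ne_of_mem_erase hj')]
  have huP3 : uik ℓ m l d j k (∏ j' ∈ univ.erase i, ∏ r ∈ range (-(a j' i)).toNat, ∏ p : Fin (m j'), (zvar ℓ m l - cst ℓ m l (qz ((d j' : ℤ) * (a j' i + 2 * ((r : ℤ) + 1)))) * V ℓ m l j' p ^ 2)) = ((∏ r ∈ range (-(a j i)).toNat, (zvar ℓ m l - cst ℓ m l (qz ((d j : ℤ) * (a j i + 2 * (((r + 1 : ℕ) : ℤ) + 1)))) * V ℓ m l j k ^ 2)) * (∏ r ∈ range (-(a j i)).toNat, ∏ p ∈ univ.erase k, (zvar ℓ m l - cst ℓ m l (qz ((d j : ℤ) * (a j i + 2 * ((r : ℤ) + 1)))) * V ℓ m l j p ^ 2))) * (∏ j' ∈ (univ.erase i).erase j, ∏ r ∈ range (-(a j' i)).toNat, ∏ p : Fin (m j'), (zvar ℓ m l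 - cst ℓ m l (qz ((d j' : ℤ) * (a j' i + 2 * ((r : ℤ) + 1)))) * V ℓ m l j' p ^ 2)) := by
    rw [map_prod, ← Finset.mul_prod_erase (univ.erase i)
      (fun j' => uik ℓ m l d j k (∏ r ∈ range (-(a j' i)).toNat, ∏ p : Fin (m j'), (zvar ℓ m l - cst ℓ m l (qz ((d j' : ℤ) * (a j' i + 2 * ((r : ℤ) + 1)))) * V ℓ m l j' p ^ 2))) hjmem]
    rw [huBj]
    congr 1
    exact Finset.prod_congr rfl hufix
  have hP3split : (∏ j' ∈ univ.erase i, ∏ r ∈ range (-(a j' i)).toNat, ∏ p : Fin (m j'), (zvar ℓ m l - cst ℓ m l (qz ((d j' : ℤ) * (a j' i + 2 * ((r : ℤ) + 1)))) * V ℓ m l j' p ^ 2)) = ((∏ r ∈ range (-(a j i)).toNat, (zvar ℓ m l - cst ℓ m l (qz ((d j : ℤ) * (a j i + 2 * ((r : ℤ) + 1)))) * V ℓ m l j k ^ 2)) * (∏ r ∈ range (-(a j i)).toNat, ∏ p ∈ univ.erase k, (zvar ℓ m l - cst ℓ m l (qz ((d j : ℤ) * (a j i + 2 * ((r : ℤ)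 + 1)))) * V ℓ m l j p ^ 2))) * (∏ j' ∈ (univ.erase i).erase j, ∏ r ∈ range (-(a j' i)).toNat, ∏ p : Fin (m j'), (zvar ℓ m l - cst ℓ m l (qz ((d j' : ℤ) * (a j' i + 2 * ((r : ℤ) + 1)))) * V ℓ m l j' p ^ 2)) := by
    rw [← Finset.mul_prod_erase (univ.erase i)
      (fun j' => ∏ r ∈ range (-(a j' i)).toNat, ∏ p : Fin (m j'), (zvar ℓ m l - cst ℓ m l (qz ((d j' : ℤ) * (a j' i + 2 * ((r : ℤ) + 1)))) * V ℓ m l j' p ^ 2)) hjmem, hBsplit]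
  have hstep1 := Finset.prod_range_succ' (fun r : ℕ => zvar ℓ m l - cst ℓ m l (qz ((d j : ℤ) * (a j i + 2 * ((r : ℤ) + 1)))) * V ℓ m l j k ^ 2) (-(a j i)).toNat
  have hstep2 := Finset.prod_range_succ (fun r : ℕ => zvar ℓ m l - cst ℓ m l (qz ((d j : ℤ) * (a j i + 2 * ((r : ℤ) + 1)))) * V ℓ m l j k ^ 2) (-(a j i)).toNat
  have htel : (∏ r ∈ range (-(a j i)).toNat, (zvar ℓ m l - cst ℓ m l (qz ((d j : ℤ) * (a j i + 2 * (((r + 1 : ℕ) : ℤ) + 1)))) * V ℓ m l j k ^ 2)) * (zvar ℓ m l - cst ℓ m l (qz ((d j : ℤ) * (a j i + 2 * (((0 : ℕ) : ℤ) + 1)))) * V ℓ m l j k ^ 2) = (∏ r ∈ range (-(a j i)).toNat, (zvar ℓ m l - cst ℓ m l (qz ((d j : ℤ) * (a j i + 2 * ((r : ℤ) + 1)))) * V ℓ m l j k ^ 2)) * (zvar ℓ m l - cst ℓ m l (qz ((d j : ℤ) * (a j i + 2 * ((((-(a j i)).toNat : ℕ) : ℤ) + 1)))) * V ℓ m l j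 k ^ 2) := by
    rw [← hstep1, hstep2]
  have hfcR : zvar ℓ m l - cst ℓ m l (qiz ℓ d i (-(a i j))) * (cst ℓ m l (qiz ℓ d j 2) * V ℓ m l j k ^ 2) = (zvar ℓ m l - cst ℓ m l (qz ((d j : ℤ) * (a j i + 2 * ((((-(a j i)).toNat : ℕ) : ℤ) + 1)))) * V ℓ m l j k ^ 2) := by
    rw [← mul_assoc, ← cst_mul]
    have hcc : qiz ℓ d i (-(a i j)) * qiz ℓ d j 2
        = qz ((d j : ℤ) * (a j i + 2 * ((((-(a j i)).toNat : ℕ) : ℤ) + 1))) := by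
      rw [qiz, qiz, qz, ← zpow_add₀ qElt_ne]
      congr 1
      rw [Int.toNat_of_nonneg hA0]
      linear_combination (-1 : ℤ) * hsym i j
    rw [hcc]
  have hfc0 : cst ℓ m l (qiz ℓ d i (-(a i j))) * zvar ℓ m l - cst ℓ m l (qiz ℓ d j 2) * V ℓ m l j k ^ 2 = cst ℓ m l (qiz ℓ d i (-(a i j))) * (zvar ℓ m l - cst ℓ m l (qz ((d j : ℤ) * (a j i + 2 * (((0 : ℕ) : ℤ) + 1)))) * V ℓ m l j k ^ 2) := by
    have hq0 : cst ℓ m l (qiz ℓ d j 2) = cst ℓ m l (qiz ℓ d i (-(a i j))) * cst ℓ m l (qz ((d j : ℤ) * (a j i + 2 * (((0 : ℕ) : ℤ) + 1)))) := by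
      rw [← cst_mul]
      congr 1
      rw [qiz, qiz, qz, ← zpow_add₀ qElt_ne]
      congr 1
      push_cast
      linear_combination hsym i j
    linear_combination (-(V ℓ m l j k ^ 2)) * hq0
  have hca : cst ℓ m l (qiz ℓ d i (-(a i j))) * cst ℓ m l ((qElt ^ (d j)) ^ (a j i)) = 1 := by
    rw [← cst_mul]
    rw [show qiz ℓ d i (-(a i j)) * (qElt ^ (d j)) ^ (a j i) = 1 from by
      rw [qiz, ← zpow_natCast qElt (d j), ← zpow_mul, ← zpow_add₀ qElt_ne,
        show (d i : ℤ) * (-(a i j)) + ((d j : ℕ) : ℤ) * (a j i) = 0 from by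
          linear_combination (-1 : ℤ) * hsym i j, zpow_zero], cst_one]
  simp only [Kmul]
  rw [map_div₀, map_mul, map_mul, map_mul, uik_cst, hP1, hP2, huP3, hP4, hP3split, hfcR, hfc0]
  linear_combination (-(cst ℓ m l (cElt ℓ m d a i) * (∏ j' : Fin ℓ, ∏ p : Fin (m j'), V ℓ m l j' p ^ a j' i) * (∏ t : Fin (l i), (zvar ℓ m l * (W ℓ m l i t)⁻¹ - W ℓ m l i t)) * (∏ r ∈ range (-(a j i)).toNat, ∏ p ∈ univ.erase k, (zvar ℓ m l - cst ℓ m l (qz ((d j : ℤ) * (a j i + 2 * ((r : ℤ) + 1)))) * V ℓ m l j p ^ 2)) * (∏ j' ∈ (univ.erase i).erase j, ∏ r ∈ range (-(a j' i)).toNat, ∏ p : Fin (m j'), (zvar ℓ m l - cst ℓ m l (qz ((d j' : ℤ) * (a j' i + 2 * ((r : ℤ) + 1)))) * V ℓ m l j' p ^ 2)) / (∏ p : Fin (m i), ((zvar ℓ m l - V ℓ m l i p ^ 2) * (zvar ℓ m l - cst ℓ m l (qiz ℓ d i 2) * V ℓ m l i p ^ 2))))) * htel + (-((cst ℓ m l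 (cElt ℓ m d a i) * (∏ j' : Fin ℓ, ∏ p : Fin (m j'), V ℓ m l j' p ^ a j' i) * (∏ t : Fin (l i), (zvar ℓ m l * (W ℓ m l i t)⁻¹ - W ℓ m l i t)) * (∏ r ∈ range (-(a j i)).toNat, ∏ p ∈ univ.erase k, (zvar ℓ m l - cst ℓ m l (qz ((d j : ℤ) * (a j i + 2 * ((r : ℤ) + 1)))) * V ℓ m l j p ^ 2)) * (∏ j' ∈ (univ.erase i).erase j, ∏ r ∈ range (-(a j' i)).toNat, ∏ p : Fin (m j'), (zvar ℓ m l - cst ℓ m l (qz ((d j' : ℤ) * (a j' i + 2 * ((r : ℤ) + 1)))) * V ℓ m l j' p ^ 2)) / (∏ p : Fin (m i), ((zvar ℓ m l - V ℓ m l i p ^ 2) * (zvar ℓ m l - cst ℓ m l (qiz ℓ d i 2) * V ℓ m l i p ^ 2)))) * (zvar ℓ m l - cst ℓ m l (qz ((d j : ℤ) * (a j i + 2 * (((0 : ℕ) : ℤ) + 1)))) * V ℓ m l j k ^ 2) * (∏ r ∈ range (-(a j i)).toNat, (zvar ℓ m l - cst ℓ m l (qz ((d j : ℤ) * (a j i +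 2 * (((r + 1 : ℕ) : ℤ) + 1)))) * V ℓ m l j k ^ 2)))) * hca

end Key2
section KeyAll

variable (ℓ : ℕ) (m l : Fin ℓ → ℕ) (d : Fin ℓ → ℕ) (a : Fin ℓ → Fin ℓ → ℤ)

lemma key_all (ha : ∀ i, a i i = 2) (ha' : ∀ i j, i ≠ j → a i j ≤ 0)
    (hsym : ∀ i j, (d i : ℤ) * a i j = (d j : ℤ) * a j i)
    (i j : Fin ℓ) (k : Fin (m j)) :
    (zvar ℓ m l - cst ℓ m l (qiz ℓ d i (-(a i j))) *
        (cst ℓ m l (qiz ℓ d j 2) * V ℓ m l j k ^ 2)) * Kmul ℓ m l d a i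
      = (cst ℓ m l (qiz ℓ d i (-(a i j))) * zvar ℓ m l
          - cst ℓ m l (qiz ℓ d j 2) * V ℓ m l j k ^ 2)
        * uik ℓ m l d j k (Kmul ℓ m l d a i) := by
  by_cases hji : j = i
  · subst hji
    exact key_eq ℓ m l d a ha j k
  · exact key_ne ℓ m l d a ha' hsym i j hji k

end KeyAll
/-- the quantum affine Cartan–lowering relation, mode-wise. -/
theorem qaffine_KF
    (ℓ : ℕ) (hℓ : 1 ≤ ℓ)
    (a : Fin ℓ → Fin ℓ → ℤ) (ha : ∀ i, a i i = 2) (ha' : ∀ i j, i ≠ j → a i j ≤ 0)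
    (d : Fin ℓ → ℕ) (hd : ∀ i, 0 < d i)
    (hsym : ∀ i j, (d i : ℤ) * a i j = (d j : ℤ) * a j i)
    (m : Fin ℓ → ℕ) (hm : ∀ i, 0 < m i)
    (l : Fin ℓ → ℕ) (hln : ∀ i, (l i : ℤ) = ∑ j, (m j : ℤ) * a j i)
    (Rp Rm : (i : Fin ℓ) → Polynomial (WField ℓ l))
    (hR : ∀ i, Rp i * Rm i =
      ∏ t : Fin (l i), (Polynomial.X * Polynomial.C (Wsmall ℓ l i t)⁻¹
        - Polynomial.C (Wsmall ℓ l i t)))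
    (i j : Fin ℓ) (n : ℤ) :
    zvar ℓ m l • (KopZ ℓ m l d a i ∘ Fnop ℓ m l d a Rm j n)
        - cst ℓ m l (qiz ℓ d i (-(a i j))) • (KopZ ℓ m l d a i ∘ Fnop ℓ m l d a Rm j (n + 1))
      = (cst ℓ m l (qiz ℓ d i (-(a i j))) * zvar ℓ m l) •
            (Fnop ℓ m l d a Rm j n ∘ KopZ ℓ m l d a i)
        - Fnop ℓ m l d a Rm j (n + 1) ∘ KopZ ℓ m l d a i := by
  classical
  funext f
  simp only [Pi.sub_apply, Pi.smul_apply, smul_eq_mul, Function.comp_apply,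
    KopZ_apply, Fnop_apply, map_mul]
  simp only [Finset.mul_sum]
  rw [← Finset.sum_sub_distrib, ← Finset.sum_sub_distrib]
  refine Finset.sum_congr rfl (fun k _ => ?_)
  have hw : Gcoef ℓ m l d a Rm j (n + 1) k =
      (cst ℓ m l (qiz ℓ d j 2) * V ℓ m l j k ^ 2) * Gcoef ℓ m l d a Rm j n k := by
    simp only [Gcoef]
    have h1 : qiz ℓ d j (2 * (n + 1)) = qiz ℓ d j 2 * qiz ℓ d j (2 * n) := by
      rw [qiz, qiz, qiz, ← zpow_add₀ qElt_ne]
      congr 1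
      ring
    have h2 : V ℓ m l j k ^ (2 * (n + 1) - 2) =
        V ℓ m l j k ^ (2 : ℕ) * V ℓ m l j k ^ (2 * n - 2) := by
      rw [← zpow_natCast (V ℓ m l j k) 2, ← zpow_add₀ (V_ne_zero ℓ m l j k)]
      congr 1
      push_cast
      ring
    rw [h1, cst_mul, h2]
    ring
  have hkey := key_all ℓ m l d a ha ha' hsym i j k
  linear_combination (Pref ℓ m l d a j * Gcoef ℓ m l d a Rm j n k * (uik ℓ m l d j k) f) * hkey
    + (Pref ℓ m l d a j * (uik ℓ m l d j k) f *
        ((uik ℓ m l d j k) (Kmul ℓ m l d a i)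
          - cst ℓ m l (qiz ℓ d i (-(a i j))) * Kmul ℓ m l d a i)) * hw
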